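/- If the variable x occurs free exactly once in the QΛ term M, and the bit-constant labels occurring in M are pairwise distinct, the bit-constant labels occurring in N are pairwise distinct, and no label occurs in both M and N, then the bit-constant labels occurring in the substituted term M{N/x} are pairwise distinct. -/

import Mathlib

namespace QL

/-- Types of the linear quantum λ-calculus QΛ: `A ::= B | A ⊸ B | A ⊗ B`. -/
inductive QType : Type
  | bit : QType
  | lolli : QType → QType → QType
  | tens : QType → QType → QType
  deriving DecidableEq

/-- A fixed finite set 𝒰 of unitary operators, each acting on `ℂ^(2^n)`
(indexed by `Fin n → Bool`) for its arity `n`. -/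
structure GateSet where
  card : ℕ
  arity : Fin card → ℕ
  arity_pos : ∀ g, 0 < arity g
  mat : ∀ g, Matrix (Fin (arity g) → Bool) (Fin (arity g) → Bool) ℂ
  unitary : ∀ g, mat g ∈ Matrix.unitaryGroup (Fin (arity g) → Bool) ℂ

/-- Terms of QΛ: variables, labelled bit constants `|b⟩ₙ`, constants `U` for the
unitary operators of the gate set, tensor pairs, applications and (pattern) abstractions. -/
inductive Term (G : GateSet) : Type
  | var : ℕ → Term G
  | bit : Bool → ℕ → Term G
  | gate : Fin G.card → Term G
  | tens : Term G → Term G → Term G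
  | app : Term G → Term G → Term G
  | lam : ℕ → Term G → Term G
  | lamPair : ℕ → ℕ → Term G → Term G
  deriving DecidableEq

/-- `B^n`, the n-fold tensor `B ⊗ … ⊗ B` (right associated). -/
def nTens : ℕ → QType
  | 0 => QType.bit
  | 1 => QType.bit
  | n + 2 => QType.tens QType.bit (nTens (n + 1))

/-- Linear environments: each variable is assigned a type at most once. -/
abbrev Env := ℕ → Option QType

def Env.empty : Env := fun _ => none
def Env.single (x : ℕ) (A : QType) : Env := fun y => if y = x then some A else none
def Env.updt (Γ : Env) (x : ℕ) (A : QType) : Env := fun y => if y = x then some A else Γ y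
/-- Two environments assign types to disjoint sets of variables. -/
def Env.Disj (Γ Δ : Env) : Prop := ∀ x, Γ x = none ∨ Δ x = none
def Env.union (Γ Δ : Env) : Env := fun x =>
  match Γ x with
  | some A => some A
  | none => Δ x

/-- Type derivations of QΛ (Fig. 1): `Deriv G Γ M A` is the type of derivations
of the judgement `Γ ⊢ M : A`.  Contexts are treated multiplicatively. -/
inductive Deriv (G : GateSet) : Env → Term G → QType → Type
  | ax (x : ℕ) (A : QType) : Deriv G (Env.single x A) (.var x) A
  | bit (b : Bool) (ℓ : ℕ) : Deriv G Env.empty (.bit b ℓ) .bit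
  | gate (g : Fin G.card) :
      Deriv G Env.empty (.gate g) (.lolli (nTens (G.arity g)) (nTens (G.arity g)))
  | lam {Γ : Env} {x : ℕ} {A B : QType} {M : Term G} (hx : Γ x = none)
      (d : Deriv G (Γ.updt x A) M B) : Deriv G Γ (.lam x M) (.lolli A B)
  | lamPair {Γ : Env} {x y : ℕ} {A B C : QType} {M : Term G}
      (hxy : x ≠ y) (hx : Γ x = none) (hy : Γ y = none)
      (d : Deriv G ((Γ.updt x A).updt y B) M C) :
      Deriv G Γ (.lamPair x y M) (.lolli (.tens A B) C)
  | app {Γ Δ : Env} {M N : Term G} {A B : QType} (h : Env.Disj Γ Δ)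
      (d : Deriv G Γ M (.lolli A B)) (e : Deriv G Δ N A) :
      Deriv G (Γ.union Δ) (.app M N) B
  | tens {Γ Δ : Env} {M N : Term G} {A B : QType} (h : Env.Disj Γ Δ)
      (d : Deriv G Γ M A) (e : Deriv G Δ N B) :
      Deriv G (Γ.union Δ) (.tens M N) (.tens A B)

variable {G : GateSet}

/-- Free variables of a term. -/
def fv : Term G → Finset ℕ
  | .var x => {x}
  | .bit _ _ => ∅
  | .gate _ => ∅
  | .tens M N => fv M ∪ fv N
  | .app M N => fv M ∪ fv N
  | .lam x M => (fv M).erase x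
  | .lamPair x y M => ((fv M).erase x).erase y

/-- Renaming of the free occurrences of a variable. -/
def ren : Term G → ℕ → ℕ → Term G
  | .var z, x, y => if z = x then .var y else .var z
  | .bit b ℓ, _, _ => .bit b ℓ
  | .gate g, _, _ => .gate g
  | .tens M N, x, y => .tens (ren M x y) (ren N x y)
  | .app M N, x, y => .app (ren M x y) (ren N x y)
  | .lam z M, x, y => if z = x then .lam z M else .lam z (ren M x y)
  | .lamPair z w M, x, y =>
      if z = x ∨ w = x then .lamPair z w M else .lamPair z w (ren M x y)

def tsize : Term G → ℕ
  | .var _ => 1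
  | .bit _ _ => 1
  | .gate _ => 1
  | .tens M N => tsize M + tsize N + 1
  | .app M N => tsize M + tsize N + 1
  | .lam _ M => tsize M + 1
  | .lamPair _ _ M => tsize M + 1

/-- A simultaneous substitution, as an association list. -/
abbrev SubstMap (G : GateSet) := List (ℕ × Term G)

def fvs (σ : SubstMap G) : Finset ℕ := σ.foldr (fun p s => fv p.2 ∪ s) ∅
def doms (σ : SubstMap G) : Finset ℕ := σ.foldr (fun p s => insert p.1 s) ∅
/-- A variable fresh for a given finite set of variables. -/
def freshVar (s : Finset ℕ) : ℕ := (s.sup id) + 1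
def lookupV (x : ℕ) : SubstMap G → Option (Term G)
  | [] => none
  | p :: σ => if p.1 = x then some p.2 else lookupV x σ

/-- Fuelled capture-avoiding simultaneous substitution (bound variables are
renamed to fresh ones whenever a capture could occur). -/
def ssubstF : ℕ → Term G → SubstMap G → Term G
  | 0, M, _ => M
  | k + 1, M, σ =>
    match M with
    | .var z => (lookupV z σ).getD (.var z)
    | .bit b ℓ => .bit b ℓ
    | .gate g => .gate g
    | .tens M₁ M₂ => .tens (ssubstF k M₁ σ) (ssubstF k M₂ σ)
    | .app M₁ M₂ => .app (ssubstF k M₁ σ) (ssubstF k M₂ σ)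
    | .lam y M₁ =>
      let σ' := σ.filter (fun p => p.1 ≠ y)
      if y ∈ fvs σ' then
        let z := freshVar (fv M₁ ∪ fvs σ' ∪ doms σ' ∪ {y})
        .lam z (ssubstF k (ren M₁ y z) σ')
      else .lam y (ssubstF k M₁ σ')
    | .lamPair y w M₁ =>
      let σ' := σ.filter (fun p => p.1 ≠ y ∧ p.1 ≠ w)
      if y ∈ fvs σ' ∨ w ∈ fvs σ' then
        let base := fv M₁ ∪ fvs σ' ∪ doms σ' ∪ {y, w}
        let z := freshVar base
        let z' := freshVar (insert z base)
        .lamPair z z' (ssubstF k (ren (ren M₁ y z) w z') σ')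
      else .lamPair y w (ssubstF k M₁ σ')

/-- Capture-avoiding simultaneous substitution `M{N₁,…,Nₙ/x₁,…,xₙ}`. -/
def ssubst (M : Term G) (σ : SubstMap G) : Term G := ssubstF (tsize M) M σ

/-- Capture-avoiding substitution `M{N/x}`. -/
def subst1 (M : Term G) (x : ℕ) (N : Term G) : Term G := ssubst M [(x, N)]

/-- The list of labels of the bit constants occurring in a term. -/
def labelsL : Term G → List ℕ
  | .var _ => []
  | .gate _ => []
  | .bit _ ℓ => [ℓ]
  | .tens M N => labelsL M ++ labelsL N
  | .app M N => labelsL M ++ labelsL N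
  | .lam _ M => labelsL M
  | .lamPair _ _ M => labelsL M

/-- The number of free occurrences of a variable in a term. -/
def fcount (x : ℕ) : Term G → ℕ
  | .var z => if z = x then 1 else 0
  | .bit _ _ => 0
  | .gate _ => 0
  | .tens M N => fcount x M + fcount x N
  | .app M N => fcount x M + fcount x N
  | .lam y M => if y = x then 0 else fcount x M
  | .lamPair y w M => if y = x ∨ w = x then 0 else fcount x M

lemma tsize_pos (M : Term G) : 0 < tsize M := by
  cases M <;> simp [tsize]

lemma tsize_ren (M : Term G) (y z : ℕ) : tsize (ren M y z) = tsize M := by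
  induction M generalizing y z with
  | var a => simp [ren, tsize]; split <;> simp [tsize]
  | bit b ℓ => simp [ren]
  | gate g => simp [ren]
  | tens M₁ M₂ ih₁ ih₂ => simp [ren, tsize, ih₁, ih₂]
  | app M₁ M₂ ih₁ ih₂ => simp [ren, tsize, ih₁, ih₂]
  | lam a M₁ ih => simp only [ren]; split <;> simp [tsize, ih]
  | lamPair a b M₁ ih => simp only [ren]; split <;> simp [tsize, ih]

lemma labels_ren (M : Term G) (y z : ℕ) : labelsL (ren M y z) = labelsL M := by
  induction M generalizing y z with
  | var a => simp [ren]; split <;> simp [labelsL]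
  | bit b ℓ => simp [ren]
  | gate g => simp [ren]
  | tens M₁ M₂ ih₁ ih₂ => simp [ren, labelsL, ih₁, ih₂]
  | app M₁ M₂ ih₁ ih₂ => simp [ren, labelsL, ih₁, ih₂]
  | lam a M₁ ih => simp only [ren]; split <;> simp [labelsL, ih]
  | lamPair a b M₁ ih => simp only [ren]; split <;> simp [labelsL, ih]

lemma fcount_ren (M : Term G) (x y z : ℕ) (hxy : x ≠ y) (hxz : x ≠ z) :
    fcount x (ren M y z) = fcount x M := by
  induction M generalizing y z with
  | var a =>
    simp only [ren]; split
    · rename_i h; subst h; simp [fcount, Ne.symm hxy, Ne.symm hxz]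
    · rfl
  | bit b ℓ => simp [ren]
  | gate g => simp [ren]
  | tens M₁ M₂ ih₁ ih₂ => simp [ren, fcount, ih₁ _ _ hxy hxz, ih₂ _ _ hxy hxz]
  | app M₁ M₂ ih₁ ih₂ => simp [ren, fcount, ih₁ _ _ hxy hxz, ih₂ _ _ hxy hxz]
  | lam a M₁ ih => simp only [ren]; split <;> simp [fcount, ih _ _ hxy hxz]
  | lamPair a b M₁ ih => simp only [ren]; split <;> simp [fcount, ih _ _ hxy hxz]

lemma labels_ssubst_nil (k : ℕ) (M : Term G) : labelsL (ssubstF k M []) = labelsL M := by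
  induction k generalizing M with
  | zero => rfl
  | succ k ih =>
    cases M with
    | var a => simp [ssubstF, lookupV]
    | bit b ℓ => simp [ssubstF]
    | gate g => simp [ssubstF]
    | tens M₁ M₂ => simp [ssubstF, labelsL, ih]
    | app M₁ M₂ => simp [ssubstF, labelsL, ih]
    | lam a M₁ => simp [ssubstF, fvs, labelsL, ih]
    | lamPair a b M₁ => simp [ssubstF, fvs, labelsL, ih]

lemma freshVar_not_mem (s : Finset ℕ) : freshVar s ∉ s := by
  intro h
  have h2 : id (freshVar s) ≤ s.sup id := Finset.le_sup h
  simp only [freshVar, id] at h2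
  omega

lemma labels_ssubst_zero (k : ℕ) (M N : Term G) (x : ℕ)
    (hk : tsize M ≤ k) (h0 : fcount x M = 0) :
    labelsL (ssubstF k M [(x, N)]) = labelsL M := by
  induction k generalizing M with
  | zero => have := tsize_pos M; omega
  | succ k ih =>
    cases M with
    | var a =>
      have ha : ¬ x = a := by
        intro h; subst h; simp [fcount] at h0
      simp [ssubstF, lookupV, ha]
    | bit b ℓ => simp [ssubstF]
    | gate g => simp [ssubstF]
    | tens M₁ M₂ =>
      simp only [fcount] at h0
      simp only [tsize] at hk
      simp [ssubstF, labelsL, ih M₁ (by omega) (by omega), ih M₂ (by omega) (by omega)]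
    | app M₁ M₂ =>
      simp only [fcount] at h0
      simp only [tsize] at hk
      simp [ssubstF, labelsL, ih M₁ (by omega) (by omega), ih M₂ (by omega) (by omega)]
    | lam a M₁ =>
      simp only [tsize] at hk
      simp only [ssubstF]
      by_cases hax : x = a
      · subst hax
        have hfil : ([(x, N)] : SubstMap G).filter (fun p => p.1 ≠ x) = [] := by
          simp [List.filter]
        rw [hfil]
        simp [fvs, labelsL, labels_ssubst_nil]
      · have hfil : ([(x, N)] : SubstMap G).filter (fun p => p.1 ≠ a) = [(x, N)] := by
          simp [List.filter, hax]
        rw [hfil]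
        have h1 : fcount x M₁ = 0 := by simpa [fcount, Ne.symm hax] using h0
        split
        · simp only [labelsL]
          set z := freshVar (fv M₁ ∪ fvs [(x, N)] ∪ doms [(x, N)] ∪ {a}) with hz
          have hxz : x ≠ z := by
            intro h
            apply freshVar_not_mem (fv M₁ ∪ fvs [(x, N)] ∪ doms [(x, N)] ∪ {a})
            rw [← hz, ← h]
            simp [doms]
          rw [ih _ (by rw [tsize_ren]; omega)
              (by rw [fcount_ren _ _ _ _ hax hxz]; exact h1), labels_ren]
        · simp only [labelsL]
          exact ih M₁ (by omega) h1
    | lamPair a b M₁ =>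
      simp only [tsize] at hk
      simp only [ssubstF]
      by_cases hab : x = a ∨ x = b
      · have hfil : ([(x, N)] : SubstMap G).filter (fun p => p.1 ≠ a ∧ p.1 ≠ b) = [] := by
          rcases hab with h | h <;> subst h <;> simp [List.filter]
        rw [hfil]
        simp [fvs, labelsL, labels_ssubst_nil]
      · push_neg at hab
        obtain ⟨hxa, hxb⟩ := hab
        have hfil : ([(x, N)] : SubstMap G).filter (fun p => p.1 ≠ a ∧ p.1 ≠ b) = [(x, N)] := by
          simp [List.filter, hxa, hxb]
        rw [hfil]
        have h1 : fcount x M₁ = 0 := by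
          simpa [fcount, Ne.symm hxa, Ne.symm hxb] using h0
        split
        · simp only [labelsL]
          set base := fv M₁ ∪ fvs [(x, N)] ∪ doms [(x, N)] ∪ {a, b} with hbase
          set z := freshVar base with hz
          set z' := freshVar (insert z base) with hz'
          have hxmem : x ∈ base := by rw [hbase]; simp [doms]
          have hxz : x ≠ z := by
            intro h; apply freshVar_not_mem base; rw [← hz, ← h]; exact hxmem
          have hxz' : x ≠ z' := by
            intro h; apply freshVar_not_mem (insert z base); rw [← hz', ← h]
            exact Finset.mem_insert_of_mem hxmem
          rw [ih _ (by rw [tsize_ren, tsize_ren]; omega)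
              (by rw [fcount_ren _ _ _ _ hxb hxz', fcount_ren _ _ _ _ hxa hxz]; exact h1),
            labels_ren, labels_ren]
        · simp only [labelsL]
          exact ih M₁ (by omega) h1

lemma labels_ssubst_one (k : ℕ) (M N : Term G) (x : ℕ)
    (hk : tsize M ≤ k) (h1 : fcount x M = 1) :
    (labelsL (ssubstF k M [(x, N)])).Perm (labelsL M ++ labelsL N) := by
  induction k generalizing M with
  | zero => have := tsize_pos M; omega
  | succ k ih =>
    cases M with
    | var a =>
      have ha : a = x := by
        by_contra h; simp [fcount, h] at h1
      subst ha
      simp [ssubstF, lookupV, labelsL]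
    | bit b ℓ => simp [fcount] at h1
    | gate g => simp [fcount] at h1
    | tens M₁ M₂ =>
      simp only [fcount] at h1
      simp only [tsize] at hk
      simp only [ssubstF, labelsL]
      rcases Nat.add_eq_one_iff.mp h1 with ⟨c1, c2⟩ | ⟨c1, c2⟩
      · rw [labels_ssubst_zero k M₁ N x (by omega) c1, List.append_assoc]
        exact (ih M₂ (by omega) c2).append_left _
      · rw [labels_ssubst_zero k M₂ N x (by omega) c2]
        refine ((ih M₁ (by omega) c1).append_right _).trans ?_
        rw [List.append_assoc, List.append_assoc]
        exact List.Perm.append_left _ List.perm_append_comm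
    | app M₁ M₂ =>
      simp only [fcount] at h1
      simp only [tsize] at hk
      simp only [ssubstF, labelsL]
      rcases Nat.add_eq_one_iff.mp h1 with ⟨c1, c2⟩ | ⟨c1, c2⟩
      · rw [labels_ssubst_zero k M₁ N x (by omega) c1, List.append_assoc]
        exact (ih M₂ (by omega) c2).append_left _
      · rw [labels_ssubst_zero k M₂ N x (by omega) c2]
        refine ((ih M₁ (by omega) c1).append_right _).trans ?_
        rw [List.append_assoc, List.append_assoc]
        exact List.Perm.append_left _ List.perm_append_comm
    | lam a M₁ =>
      simp only [tsize] at hk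
      simp only [ssubstF]
      have hax : ¬ x = a := by
        intro h; subst h; simp [fcount] at h1
      have hfil : ([(x, N)] : SubstMap G).filter (fun p => p.1 ≠ a) = [(x, N)] := by
        simp [List.filter, hax]
      rw [hfil]
      have h1' : fcount x M₁ = 1 := by simpa [fcount, Ne.symm hax] using h1
      split
      · simp only [labelsL]
        set z := freshVar (fv M₁ ∪ fvs [(x, N)] ∪ doms [(x, N)] ∪ {a}) with hz
        have hxz : x ≠ z := by
          intro h
          apply freshVar_not_mem (fv M₁ ∪ fvs [(x, N)] ∪ doms [(x, N)] ∪ {a})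
          rw [← hz, ← h]
          simp [doms]
        have := ih (ren M₁ a z) (by rw [tsize_ren]; omega)
          (by rw [fcount_ren _ _ _ _ hax hxz]; exact h1')
        rwa [labels_ren] at this
      · simp only [labelsL]
        exact ih M₁ (by omega) h1'
    | lamPair a b M₁ =>
      simp only [tsize] at hk
      simp only [ssubstF]
      have hab : ¬ (x = a ∨ x = b) := by
        intro h
        rcases h with h | h <;> subst h <;> simp [fcount] at h1
      push_neg at hab
      obtain ⟨hxa, hxb⟩ := hab
      have hfil : ([(x, N)] : SubstMap G).filter (fun p => p.1 ≠ a ∧ p.1 ≠ b) = [(x, N)] := by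
        simp [List.filter, hxa, hxb]
      rw [hfil]
      have h1' : fcount x M₁ = 1 := by
        simpa [fcount, Ne.symm hxa, Ne.symm hxb] using h1
      split
      · simp only [labelsL]
        set base := fv M₁ ∪ fvs [(x, N)] ∪ doms [(x, N)] ∪ {a, b} with hbase
        set z := freshVar base with hz
        set z' := freshVar (insert z base) with hz'
        have hxmem : x ∈ base := by rw [hbase]; simp [doms]
        have hxz : x ≠ z := by
          intro h; apply freshVar_not_mem base; rw [← hz, ← h]; exact hxmem
        have hxz' : x ≠ z' := by
          intro h; apply freshVar_not_mem (insert z base); rw [← hz', ← h]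
          exact Finset.mem_insert_of_mem hxmem
        have := ih (ren (ren M₁ a z) b z') (by rw [tsize_ren, tsize_ren]; omega)
          (by rw [fcount_ren _ _ _ _ hxb hxz', fcount_ren _ _ _ _ hxa hxz]; exact h1')
        rwa [labels_ren, labels_ren] at this
      · simp only [labelsL]
        exact ih M₁ (by omega) h1'

/-- If `x` occurs free exactly once in `M`, the bit-constant labels of `M` are
pairwise distinct, those of `N` are pairwise distinct, and no label occurs in
both, then the labels of `M{N/x}` are pairwise distinct. -/
theorem labels_nodup_subst (G : GateSet) (M N : Term G) (x : ℕ)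
    (hocc : fcount x M = 1)
    (hM : (labelsL M).Nodup) (hN : (labelsL N).Nodup)
    (hdisj : ∀ ℓ ∈ labelsL M, ℓ ∉ labelsL N) :
    (labelsL (subst1 M x N)).Nodup := by
  have hperm := labels_ssubst_one (tsize M) M N x le_rfl hocc
  refine hperm.nodup_iff.mpr ?_
  rw [List.nodup_append]
  exact ⟨hM, hN, fun ℓ hℓ b hb hEq => hdisj ℓ hℓ (by rw [hEq]; exact hb)⟩

end QL
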